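/- In the W[1]-hardness program P_G, in any sequentially consistent interleaving, the checker threads execute in order: all events of Checker_1 precede all events of Checker_2, which precede all of Checker_3, and so on up to Checker_k. -/

import Mathlib

/-- Memory events: reads and writes of natural-number values to variables of type `V`. -/
inductive Event (V : Type) where
  | read  (x : V) (d : ℕ)
  | write (x : V) (d : ℕ)
deriving DecidableEq

variable {V ι : Type}

/-- A sequence of events is sequentially consistent (SC): every read `r(x,d)` has a
preceding write `w(x,d)` with no write of a different value to `x` in between. -/
def SC (σ : List (Event V)) : Prop :=
  ∀ (p : ℕ) x d, σ[p]? = some (Event.read x d) →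
    ∃ q : ℕ, q < p ∧ σ[q]? = some (Event.write x d) ∧
      ∀ r, q < r → r < p → ∀ d', d' ≠ d → σ[r]? ≠ some (Event.write x d')

/-- `σ` is an interleaving of the given threads: its restriction to each
thread identifier equals that thread's event sequence. -/
def IsInterleaving [DecidableEq ι] (threads : ι → List (Event V)) (σ : List (ι × Event V)) : Prop :=
  ∀ i, σ.filterMap (fun a => if a.1 = i then some a.2 else none) = threads i

/-- A preemption occurs at position `j`: the events at `j` and `j+1` are from
different threads and the event at `j` is not the last event of its thread. -/
def PreemptionAt (σ : List (ι × Event V)) (j : ℕ) : Prop :=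
  ∃ a b, σ[j]? = some a ∧ σ[j + 1]? = some b ∧ a.1 ≠ b.1 ∧
    ∃ r c, j < r ∧ σ[r]? = some c ∧ c.1 = a.1

open Classical in
/-- The number of preemption positions of `σ`. -/
noncomputable def numPreemptions (σ : List (ι × Event V)) : ℕ :=
  ((Finset.range σ.length).filter fun j => PreemptionAt σ j).card

open Classical in
/-- The number of context switches of `σ` (adjacent events of different threads). -/
noncomputable def numSwitches (σ : List (ι × Event V)) : ℕ :=
  ((Finset.range σ.length).filter fun j =>
    ∃ a b, σ[j]? = some a ∧ σ[j + 1]? = some b ∧ a.1 ≠ b.1).card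

/-- The (increasing) list of positions of `σ` carrying events of thread `i`. -/
def threadPositions [DecidableEq ι] (σ : List (ι × Event V)) (i : ι) : List ℕ :=
  (List.range σ.length).filter fun p => decide ((σ[p]?).map Prod.fst = some i)

/-- The position in `σ` of the `j`-th event of thread `i`. -/
def posOf [DecidableEq ι] (σ : List (ι × Event V)) (i : ι) (j : ℕ) : ℕ :=
  (threadPositions σ i).getD j 0

/-- All events of thread `t` occur before all events of thread `t'` in `σ`. -/
def ThreadBefore [DecidableEq ι] (σ : List (ι × Event V)) (t t' : ι) : Prop :=
  ∀ p ∈ threadPositions σ t, ∀ q ∈ threadPositions σ t', p < q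

/-- The event is a write to variable `x`. -/
def writesTo (x : V) : Event V → Prop
  | Event.write y _ => y = x
  | _ => False

/-- A 1-writer program: for each variable, a single thread performs all writes to it. -/
def OneWriter (threads : ι → List (Event V)) : Prop :=
  ∀ x i i', (∃ e ∈ threads i, writesTo x e) → (∃ e ∈ threads i', writesTo x e) → i = i'

/-- The events of thread `i` from its index `s` onwards appear contiguously in `σ`. -/
def ContiguousFrom [DecidableEq ι] (σ : List (ι × Event V)) (i : ι) (s : ℕ) : Prop :=
  ∀ j, s ≤ j → j + 1 < (threadPositions σ i).length → posOf σ i (j + 1) = posOf σ i j + 1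

/-- Conflict-graph edge `tr → tw` between outer blocks (suffixes of the threads
starting at indices `s tr`, `s tw`): the last write to some variable `x` in the
outer block of `tw` conflicts with a read of `x` in the outer block of `tr`. -/
def ConflictEdge [DecidableEq ι] (threads : ι → List (Event V)) (s : ι → ℕ) (tr tw : ι) : Prop :=
  tr ≠ tw ∧ ∃ x d d' jr jw, d ≠ d' ∧
    s tr ≤ jr ∧ (threads tr)[jr]? = some (Event.read x d) ∧
    s tw ≤ jw ∧ (threads tw)[jw]? = some (Event.write x d') ∧
    ∀ j d'', jw < j → (threads tw)[j]? ≠ some (Event.write x d'')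

/-- Splitting a list into contiguous blocks immediately after each position in `cut`. -/
def splitAtCuts {α : Type} (l : List α) (cut : Finset ℕ) : List (List α) :=
  let cs := cut.sort (· ≤ ·)
  ((0 :: cs.map (· + 1)).zip (cs.map (· + 1) ++ [l.length])).map fun p => (l.take p.2).drop p.1


/-- Variables of the W[1]-hardness reduction program `P_G`. -/
inductive GVar (α : Type) (k : ℕ) where
  | y (e : Sym2 α)
  | x (j : Fin k)
  | s
  | p (j : ℕ)
deriving DecidableEq

/-- Thread identifiers of `P_G`. -/
inductive GTId (k : ℕ) where
  | init
  | checker (j : Fin k)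
  | sel (j : Fin k)
deriving DecidableEq

variable {α : Type} [Fintype α] [DecidableEq α]

/-- The list of edges of `G` incident on `v`. -/
noncomputable def incEdges (G : SimpleGraph α) [DecidableRel G.Adj] (v : α) : List (Sym2 α) :=
  (G.edgeFinset.filter fun e => v ∈ e).toList

/-- The `Init` thread of `P_G`. -/
noncomputable def initThread (G : SimpleGraph α) [DecidableRel G.Adj] (k : ℕ) :
    List (Event (GVar α k)) :=
  (G.edgeFinset.toList.map fun e => Event.write (GVar.y e) 0) ++
  ((List.finRange k).map fun j => Event.write (GVar.x j) 1) ++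
  [Event.write GVar.s 1, Event.write (GVar.p 0) 1]

/-- The thread `Checker_j` of `P_G`. -/
def checkerThread {k : ℕ} (j : Fin k) : List (Event (GVar α k)) :=
  [Event.read (GVar.p j.val) 1] ++
  (if j.val + 1 ≠ k then [Event.write GVar.s 0] else []) ++
  [Event.read (GVar.x j) 0] ++
  (if j.val + 1 = k then [Event.write GVar.s 1] else []) ++
  [Event.write (GVar.p (j.val + 1)) 1]

/-- The block `B_v^j` of selector thread `Sel_j` for vertex `v`. -/
noncomputable def selBlock (G : SimpleGraph α) [DecidableRel G.Adj] {k : ℕ} (j : Fin k) (v : α) :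
    List (Event (GVar α k)) :=
  ((incEdges G v).flatMap fun e => [Event.read (GVar.y e) 0, Event.write (GVar.y e) (j.val + 1)]) ++
  [Event.read GVar.s 1, Event.write (GVar.x j) 0, Event.write (GVar.x j) 1] ++
  ((incEdges G v).flatMap fun e => [Event.read (GVar.y e) (j.val + 1), Event.write (GVar.y e) 0])

/-- The selector thread `Sel_j` of `P_G`: one block per vertex of `G`. -/
noncomputable def selThread (G : SimpleGraph α) [DecidableRel G.Adj] {k : ℕ} (j : Fin k) :
    List (Event (GVar α k)) :=
  (Finset.univ : Finset α).toList.flatMap (selBlock G j)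

/-- The program `P_G` of the W[1]-hardness reduction with parameter `k`. -/
noncomputable def pgThreads (G : SimpleGraph α) [DecidableRel G.Adj] (k : ℕ) :
    GTId k → List (Event (GVar α k))
  | GTId.init => initThread G k
  | GTId.checker j => checkerThread j
  | GTId.sel j => selThread G j

set_option linter.unusedSectionVars false

section Aux
variable {V ι : Type} [DecidableEq ι]

lemma tp_cons (a : ι × Event V) (σ : List (ι × Event V)) (t : ι) :
    threadPositions (a :: σ) t =
      (if a.1 = t then [0] else []) ++ (threadPositions σ t).map (· + 1) := by
  unfold threadPositions
  rw [List.length_cons, List.range_succ_eq_map, List.filter_cons]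
  have h2 : (fun p => decide (((a :: σ)[p]?).map Prod.fst = some t)) ∘ Nat.succ
      = fun p => decide (((σ)[p]?).map Prod.fst = some t) := by
    funext p; rfl
  by_cases h : a.1 = t <;>
    simp [h, List.filter_map, h2, Nat.succ_eq_add_one]

lemma tp_spec (σ : List (ι × Event V)) (t : ι) :
    (threadPositions σ t).length
      = (σ.filterMap (fun a => if a.1 = t then some a.2 else none)).length ∧
    ∀ (m p : ℕ), (threadPositions σ t)[m]? = some p →
      ∃ e, σ[p]? = some (t, e) ∧
        (σ.filterMap (fun a => if a.1 = t then some a.2 else none))[m]? = some e := by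
  induction σ with
  | nil => simp [threadPositions]
  | cons a σ ih =>
    rw [tp_cons]
    by_cases h : a.1 = t
    · rw [List.filterMap_cons_some (b := a.2) (by simp [h])]
      simp only [if_pos h]
      constructor
      · simpa using ih.1
      · intro m p hm
        cases m with
        | zero =>
          simp at hm
          subst hm
          exact ⟨a.2, by simp [← h], by simp⟩
        | succ m =>
          simp only [List.cons_append, List.getElem?_cons_succ, List.nil_append] at hm ⊢
          rw [List.getElem?_map] at hm
          obtain ⟨p0, hp0, rfl⟩ := Option.map_eq_some_iff.1 hm
          obtain ⟨e, he1, he2⟩ := ih.2 m p0 hp0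
          exact ⟨e, by simpa using he1, he2⟩
    · rw [List.filterMap_cons_none (by simp [h])]
      simp only [if_neg h, List.nil_append]
      constructor
      · simpa using ih.1
      · intro m p hm
        rw [List.getElem?_map] at hm
        obtain ⟨p0, hp0, rfl⟩ := Option.map_eq_some_iff.1 hm
        obtain ⟨e, he1, he2⟩ := ih.2 m p0 hp0
        exact ⟨e, by simpa using he1, he2⟩

lemma tp_sorted (σ : List (ι × Event V)) (t : ι) :
    (threadPositions σ t).Pairwise (· < ·) := by
  unfold threadPositions
  exact (List.pairwise_lt_range (n := σ.length)).filter _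

lemma tp_mem {σ : List (ι × Event V)} {t : ι} {e : Event V} {q : ℕ}
    (hq : σ[q]? = some (t, e)) : q ∈ threadPositions σ t := by
  have hlt : q < σ.length := List.getElem?_eq_some_iff.1 hq |>.1
  have hget : σ[q] = (t, e) := (List.getElem?_eq_some_iff.1 hq).2
  simp [threadPositions, List.mem_filter, List.mem_range, hlt, hq]
  exact congrArg Prod.fst hget

lemma sorted_le_of_index_le {L : List ℕ} (hs : L.Pairwise (· < ·))
    {m m' p p' : ℕ} (hm : L[m]? = some p) (hm' : L[m']? = some p')
    (h : m ≤ m') : p ≤ p' := by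
  rcases Nat.lt_or_ge m m' with hlt | hge
  · have h1 := List.getElem?_eq_some_iff.1 hm
    have h2 := List.getElem?_eq_some_iff.1 hm'
    obtain ⟨hb1, hg1⟩ := h1
    obtain ⟨hb2, hg2⟩ := h2
    have := List.pairwise_iff_getElem.1 hs m m' hb1 hb2 hlt
    rw [hg1, hg2] at this
    exact this.le
  · have : m = m' := le_antisymm h hge
    subst this
    rw [hm] at hm'
    exact (Option.some_injective _ hm').le

end Aux

section Main
variable {α : Type} [Fintype α] [DecidableEq α]

lemma checker_len {k : ℕ} (i : Fin k) : (checkerThread (α := α) i).length = 4 := by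
  by_cases h : i.val + 1 = k <;> simp [checkerThread, h]

lemma checker_get0 {k : ℕ} (i : Fin k) :
    (checkerThread (α := α) i)[0]? = some (Event.read (GVar.p i.val) 1) := by
  by_cases h : i.val + 1 = k <;> simp [checkerThread, h]

lemma checker_write_iff {k : ℕ} (i : Fin k) (m : ℕ) :
    (checkerThread (α := α) i)[m]? = some (Event.write (GVar.p (i.val + 1)) 1) ↔ m = 3 := by
  by_cases h : i.val + 1 = k <;>
  · simp only [checkerThread, h]
    rcases m with _|_|_|_|m <;> simp [h]

lemma write_owner (G : SimpleGraph α) [DecidableRel G.Adj] {k : ℕ} (t : GTId k) (i : Fin k)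
    (he : Event.write (GVar.p (i.val + 1)) 1 ∈ pgThreads G k t) : t = GTId.checker i := by
  cases t with
  | init =>
    exfalso
    simp [pgThreads, initThread] at he
  | checker j =>
    by_cases h : j.val + 1 = k <;>
    · simp [pgThreads, checkerThread, h] at he
      have : j = i := Fin.ext (by omega)
      rw [this]
  | sel j =>
    exfalso
    simp [pgThreads, selThread, selBlock, List.mem_flatMap] at he

lemma tb_trans {V ι : Type} [DecidableEq ι] {σ : List (ι × Event V)} {t1 t2 t3 : ι}
    (hne : threadPositions σ t2 ≠ [])
    (h12 : ThreadBefore σ t1 t2) (h23 : ThreadBefore σ t2 t3) : ThreadBefore σ t1 t3 := by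
  intro p hp q hq
  obtain ⟨r, hr⟩ := List.exists_mem_of_ne_nil _ hne
  exact lt_trans (h12 p hp r hr) (h23 r hr q hq)

lemma consecutive (G : SimpleGraph α) [DecidableRel G.Adj] {k : ℕ}
    (σ : List (GTId k × Event (GVar α k)))
    (hσ : IsInterleaving (pgThreads G k) σ)
    (hsc : SC (σ.map Prod.snd))
    (i : Fin k) (h : i.val + 1 < k) :
    ThreadBefore σ (GTId.checker i) (GTId.checker ⟨i.val + 1, h⟩) := by
  set i' : Fin k := ⟨i.val + 1, h⟩ with hi'
  have hlen : ∀ t : GTId k, (threadPositions σ t).length = (pgThreads G k t).length := by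
    intro t; rw [(tp_spec σ t).1, hσ t]
  have hleni' : (threadPositions σ (GTId.checker i')).length = 4 := by
    rw [hlen]; exact checker_len i'
  have hleni : (threadPositions σ (GTId.checker i)).length = 4 := by
    rw [hlen]; exact checker_len i
  have h0 : 0 < (threadPositions σ (GTId.checker i')).length := by omega
  set pr := (threadPositions σ (GTId.checker i')).get ⟨0, h0⟩ with hprdef
  have hpr : (threadPositions σ (GTId.checker i'))[0]? = some pr := List.getElem?_eq_getElem h0
  obtain ⟨e, hσpr, hfm⟩ := (tp_spec σ (GTId.checker i')).2 0 pr hpr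
  rw [hσ (GTId.checker i')] at hfm
  have he : e = Event.read (GVar.p (i.val + 1)) 1 := by
    have := checker_get0 (α := α) i'
    simp only [pgThreads] at hfm
    rw [this] at hfm
    exact (Option.some_injective _ hfm).symm
  subst he
  have hmap : (σ.map Prod.snd)[pr]? = some (Event.read (GVar.p (i.val + 1)) 1) := by
    rw [List.getElem?_map, hσpr]; rfl
  obtain ⟨qw, hqlt, hqw, -⟩ := hsc pr (GVar.p (i.val + 1)) 1 hmap
  rw [List.getElem?_map] at hqw
  obtain ⟨a, ha, ha2⟩ := Option.map_eq_some_iff.1 hqw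
  obtain ⟨t, e2⟩ := a
  simp only at ha2
  subst ha2
  have hmem : Event.write (GVar.p (i.val + 1)) 1 ∈ pgThreads G k t := by
    rw [← hσ t]
    exact List.mem_filterMap.2 ⟨_, List.mem_of_getElem? ha, by simp⟩
  have ht := write_owner G t i hmem
  subst ht
  have hqmem : qw ∈ threadPositions σ (GTId.checker i) := tp_mem ha
  obtain ⟨m, hmq⟩ := List.getElem?_of_mem hqmem
  obtain ⟨e', he'1, he'2⟩ := (tp_spec σ (GTId.checker i)).2 m qw hmq
  rw [hσ (GTId.checker i)] at he'2
  rw [ha] at he'1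
  have he'eq : e' = Event.write (GVar.p (i.val + 1)) 1 := by
    have := Option.some_injective _ he'1
    exact (congrArg Prod.snd this).symm
  subst he'eq
  have hm3 : m = 3 := (checker_write_iff i m).1 he'2
  subst hm3
  intro p hp q hq
  obtain ⟨mp, hmp⟩ := List.getElem?_of_mem hp
  obtain ⟨mq, hmq'⟩ := List.getElem?_of_mem hq
  have hmp3 : mp ≤ 3 := by
    have := (List.getElem?_eq_some_iff.1 hmp).1
    omega
  have h1 : p ≤ qw :=
    sorted_le_of_index_le (tp_sorted σ (GTId.checker i)) hmp hmq hmp3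
  have h2 : pr ≤ q :=
    sorted_le_of_index_le (tp_sorted σ (GTId.checker i')) hpr hmq' (Nat.zero_le _)
  omega

end Main

/-- in any SC interleaving of `P_G`, the checker threads execute in
order: all events of `Checker_i` precede all events of `Checker_j` for `i < j`. -/
theorem stmt13 (G : SimpleGraph α) [DecidableRel G.Adj] (k : ℕ)
    (σ : List (GTId k × Event (GVar α k)))
    (hσ : IsInterleaving (pgThreads G k) σ)
    (hsc : SC (σ.map Prod.snd))
    (i j : Fin k) (hij : i < j) :
    ThreadBefore σ (GTId.checker i) (GTId.checker j) := by
  have hij' : i.val < j.val := hij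
  suffices h : ∀ n (i j : Fin k), j.val = i.val + n + 1 →
      ThreadBefore σ (GTId.checker i) (GTId.checker j) by
    exact h (j.val - i.val - 1) i j (by omega)
  intro n
  induction n with
  | zero =>
    intro i j hj
    have hk : i.val + 1 < k := by have := j.isLt; omega
    have hje : j = ⟨i.val + 1, hk⟩ := Fin.ext (by show j.val = i.val + 1; omega)
    rw [hje]
    exact consecutive G σ hσ hsc i hk
  | succ n ih =>
    intro i j hj
    have hk : i.val + 1 < k := by have := j.isLt; omega
    have h1 := consecutive G σ hσ hsc i hk
    have h2 := ih ⟨i.val + 1, hk⟩ j (by show j.val = (i.val + 1) + n + 1; omega)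
    refine tb_trans ?_ h1 h2
    have hl : (threadPositions σ (GTId.checker ⟨i.val + 1, hk⟩)).length = 4 := by
      rw [(tp_spec σ _).1, hσ]; exact checker_len _
    intro hnil
    rw [hnil] at hl
    simp at hl
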